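/- Let N ≥ 4 be an integer, α ∈ (0,1), and suppose the real sequences x_0,…,x_{N−3} and y_0,…,y_{N−2} solve the absorption system. Define T̄ = 2·[ Σ_{i=0}^{N−3} x_i + Σ_{j=0}^{N−2} y_j + Σ_{k=0}^{N−4} Σ_{ℓ=1}^{N−3−k} (ℓ + x_k) ] / (N(N−1)). Then T̄ = [ N⁴(α+1)² + N³(α+1)² + 12N²(α−1)² − 24N(α−1)(2α−1) + 24(α−1)² ] / ( 24N(1−α)(1+α) ). -/

import Mathlib

private lemma sum_weight (n : ℕ) (x : ℕ → ℝ) (c0 c1 c2 : ℝ) :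
    ∑ k ∈ Finset.range n, (c0 + c1*(k:ℝ) + c2*(k:ℝ)^2) * x k
      = c0 * (∑ k ∈ Finset.range n, x k) + c1 * (∑ k ∈ Finset.range n, (k:ℝ)*x k)
        + c2 * (∑ k ∈ Finset.range n, (k:ℝ)^2*x k) := by
  induction n with
  | zero => simp
  | succ n ih =>
    simp only [Finset.sum_range_succ]
    rw [ih]; ring

private lemma sum_cubic (n : ℕ) (d0 d1 d2 d3 : ℝ) :
    ∑ k ∈ Finset.range n, (d0 + d1*(k:ℝ) + d2*(k:ℝ)^2 + d3*(k:ℝ)^3)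
      = d0*(n:ℝ) + d1*((n:ℝ)*((n:ℝ)-1)/2) + d2*((n:ℝ)*((n:ℝ)-1)*(2*(n:ℝ)-1)/6)
        + d3*((n:ℝ)^2*((n:ℝ)-1)^2/4) := by
  induction n with
  | zero => simp
  | succ n ih =>
    simp only [Finset.sum_range_succ]
    rw [ih]; push_cast; ring

private lemma sum_shift_eval (n : ℕ) (y : ℕ → ℝ) (c0 c1 c2 : ℝ) :
    ∑ j ∈ Finset.range n, (c0 + c1*(j:ℝ) + c2*(j:ℝ)^2) * y (j+1)
      = (c0-c1+c2) * (∑ j ∈ Finset.range n, y j)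
        + (c1-2*c2) * (∑ j ∈ Finset.range n, (j:ℝ)*y j)
        + c2 * (∑ j ∈ Finset.range n, (j:ℝ)^2*y j)
        + ((c0-c1+c2) + (c1-2*c2)*(n:ℝ) + c2*(n:ℝ)^2) * y n - (c0-c1+c2) * y 0 := by
  induction n with
  | zero => simp
  | succ n ih =>
    simp only [Finset.sum_range_succ]
    rw [ih]; push_cast; ring

private lemma sum_reflect_eval (n : ℕ) (x : ℕ → ℝ) (c0 c1 c2 : ℝ) :
    ∑ k ∈ Finset.range n, (c0 + c1*(k:ℝ) + c2*(k:ℝ)^2) * x (n-1-k)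
      = (c0 + c1*((n:ℝ)-1) + c2*((n:ℝ)-1)^2) * (∑ k ∈ Finset.range n, x k)
        + (-c1 - 2*c2*((n:ℝ)-1)) * (∑ k ∈ Finset.range n, (k:ℝ)*x k)
        + c2 * (∑ k ∈ Finset.range n, (k:ℝ)^2*x k) := by
  have h0 := Finset.sum_range_reflect
    (fun j => ((c0 + c1*((n:ℝ)-1) + c2*((n:ℝ)-1)^2)
      + (-c1 - 2*c2*((n:ℝ)-1))*(j:ℝ) + c2*(j:ℝ)^2) * x j) n
  beta_reduce at h0
  calc ∑ k ∈ Finset.range n, (c0 + c1*(k:ℝ) + c2*(k:ℝ)^2) * x (n-1-k)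
      = ∑ k ∈ Finset.range n, ((c0 + c1*((n:ℝ)-1) + c2*((n:ℝ)-1)^2)
          + (-c1 - 2*c2*((n:ℝ)-1))*((n-1-k:ℕ):ℝ) + c2*((n-1-k:ℕ):ℝ)^2) * x (n-1-k) := by
        refine Finset.sum_congr rfl fun k hk => ?_
        have hk' : k < n := Finset.mem_range.mp hk
        have hc : ((n-1-k:ℕ):ℝ) = (n:ℝ)-1-(k:ℝ) := by
          rw [Nat.sub_sub, Nat.cast_sub (by omega : 1 + k ≤ n)]
          push_cast
          try ring
        rw [hc]; ring
    _ = ∑ j ∈ Finset.range n, ((c0 + c1*((n:ℝ)-1) + c2*((n:ℝ)-1)^2)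
          + (-c1 - 2*c2*((n:ℝ)-1))*(j:ℝ) + c2*(j:ℝ)^2) * x j := h0
    _ = _ := by rw [sum_weight]

private lemma sum_icc (M : ℕ) (c : ℝ) :
    ∑ l ∈ Finset.Icc 1 M, ((l:ℝ) + c) = (M:ℝ)*((M:ℝ)+1)/2 + (M:ℝ)*c := by
  induction M with
  | zero => simp
  | succ M ih =>
    rw [Finset.sum_Icc_succ_top (by omega), ih]
    push_cast; ring

/-- The sequences `x_0,…,x_{N−3}` and `y_0,…,y_{N−2}` solve the absorption
(expected-hitting-time) system with `ρ = (1−α)/2`: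
(i) `y_0 − α·y_{N−2} = 1`;
(ii) `x_k − (1−ρ)·y_k − ρ·x_{N−k−3} = 1 + kρ` for `0 ≤ k ≤ N−3`;
(iii) `y_k − ρ·y_{k−1} − (1−ρ)·x_{N−k−2} = k − (k−1)ρ` for `1 ≤ k ≤ N−2`. -/
def solvesAbsorption (N : ℕ) (α : ℝ) (x y : ℕ → ℝ) : Prop :=
  y 0 - α * y (N - 2) = 1 ∧
  (∀ k : ℕ, k ≤ N - 3 →
    x k - (1 - (1 - α) / 2) * y k - (1 - α) / 2 * x (N - k - 3) =
      1 + (k : ℝ) * ((1 - α) / 2)) ∧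
  (∀ k : ℕ, 1 ≤ k → k ≤ N - 2 →
    y k - (1 - α) / 2 * y (k - 1) - (1 - (1 - α) / 2) * x (N - k - 2) =
      (k : ℝ) - ((k : ℝ) - 1) * ((1 - α) / 2))

set_option maxHeartbeats 2000000 in
/-- Closed form of the worst-case expected number of interactions until a compression,
`T̄ = 2·[Σ x_i + Σ y_j + Σ_k Σ_ℓ (ℓ + x_k)] / (N(N−1))`. -/
theorem stmt2 (N : ℕ) (hN : 4 ≤ N) (α : ℝ) (hα : α ∈ Set.Ioo (0 : ℝ) 1)
    (x y : ℕ → ℝ) (h : solvesAbsorption N α x y) :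
    2 * (∑ i ∈ Finset.range (N - 2), x i + ∑ j ∈ Finset.range (N - 1), y j +
          ∑ k ∈ Finset.range (N - 3), ∑ l ∈ Finset.Icc 1 (N - 3 - k), ((l : ℝ) + x k)) /
        ((N : ℝ) * ((N : ℝ) - 1)) =
      ((N : ℝ) ^ 4 * (α + 1) ^ 2 + (N : ℝ) ^ 3 * (α + 1) ^ 2 +
          12 * (N : ℝ) ^ 2 * (α - 1) ^ 2 - 24 * (N : ℝ) * (α - 1) * (2 * α - 1) +
          24 * (α - 1) ^ 2) /
        (24 * (N : ℝ) * (1 - α) * (1 + α)) := by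
  obtain ⟨hi, hii, hiii⟩ := h
  obtain ⟨m, rfl⟩ : ∃ m, N = m + 4 := ⟨N - 4, by omega⟩
  simp only [show m + 4 - 2 = m + 2 from by omega, show m + 4 - 1 = m + 3 from by omega,
    show m + 4 - 3 = m + 1 from by omega] at hi ⊢
  -- family (ii), weights 1, k, k²
  have h0 : ∑ k ∈ Finset.range (m+2),
      ((1 + 0*(k:ℝ) + 0*(k:ℝ)^2) * x k
        - (1 - (1-α)/2) * ((1 + 0*(k:ℝ) + 0*(k:ℝ)^2) * y k)
        - (1-α)/2 * ((1 + 0*(k:ℝ) + 0*(k:ℝ)^2) * x (m+2-1-k)))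
      = ∑ k ∈ Finset.range (m+2), (1 + (1-α)/2*(k:ℝ) + 0*(k:ℝ)^2 + 0*(k:ℝ)^3) := by
    refine Finset.sum_congr rfl fun k hk => ?_
    have hk' : k < m + 2 := Finset.mem_range.mp hk
    have e := hii k (by omega)
    rw [show m + 4 - k - 3 = m + 2 - 1 - k from by omega] at e
    linear_combination e
  have h1 : ∑ k ∈ Finset.range (m+2),
      ((0 + 1*(k:ℝ) + 0*(k:ℝ)^2) * x k
        - (1 - (1-α)/2) * ((0 + 1*(k:ℝ) + 0*(k:ℝ)^2) * y k)
        - (1-α)/2 * ((0 + 1*(k:ℝ) + 0*(k:ℝ)^2) * x (m+2-1-k)))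
      = ∑ k ∈ Finset.range (m+2), (0 + 1*(k:ℝ) + (1-α)/2*(k:ℝ)^2 + 0*(k:ℝ)^3) := by
    refine Finset.sum_congr rfl fun k hk => ?_
    have hk' : k < m + 2 := Finset.mem_range.mp hk
    have e := hii k (by omega)
    rw [show m + 4 - k - 3 = m + 2 - 1 - k from by omega] at e
    linear_combination (k:ℝ) * e
  have h2 : ∑ k ∈ Finset.range (m+2),
      ((0 + 0*(k:ℝ) + 1*(k:ℝ)^2) * x k
        - (1 - (1-α)/2) * ((0 + 0*(k:ℝ) + 1*(k:ℝ)^2) * y k)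
        - (1-α)/2 * ((0 + 0*(k:ℝ) + 1*(k:ℝ)^2) * x (m+2-1-k)))
      = ∑ k ∈ Finset.range (m+2), (0 + 0*(k:ℝ) + 1*(k:ℝ)^2 + (1-α)/2*(k:ℝ)^3) := by
    refine Finset.sum_congr rfl fun k hk => ?_
    have hk' : k < m + 2 := Finset.mem_range.mp hk
    have e := hii k (by omega)
    rw [show m + 4 - k - 3 = m + 2 - 1 - k from by omega] at e
    linear_combination (k:ℝ)^2 * e
  -- family (iii), weights 1, (j+1), (j+1)²
  have h3 : ∑ j ∈ Finset.range (m+2),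
      ((1 + 0*(j:ℝ) + 0*(j:ℝ)^2) * y (j+1)
        - (1-α)/2 * ((1 + 0*(j:ℝ) + 0*(j:ℝ)^2) * y j)
        - (1 - (1-α)/2) * ((1 + 0*(j:ℝ) + 0*(j:ℝ)^2) * x (m+2-1-j)))
      = ∑ j ∈ Finset.range (m+2), (1 + (1-(1-α)/2)*(j:ℝ) + 0*(j:ℝ)^2 + 0*(j:ℝ)^3) := by
    refine Finset.sum_congr rfl fun j hj => ?_
    have hj' : j < m + 2 := Finset.mem_range.mp hj
    have e := hiii (j+1) (by omega) (by omega)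
    rw [show j + 1 - 1 = j from by omega,
      show m + 4 - (j + 1) - 2 = m + 2 - 1 - j from by omega] at e
    simp only [Nat.cast_add, Nat.cast_one] at e
    linear_combination e
  have h4 : ∑ j ∈ Finset.range (m+2),
      ((1 + 1*(j:ℝ) + 0*(j:ℝ)^2) * y (j+1)
        - (1-α)/2 * ((1 + 1*(j:ℝ) + 0*(j:ℝ)^2) * y j)
        - (1 - (1-α)/2) * ((1 + 1*(j:ℝ) + 0*(j:ℝ)^2) * x (m+2-1-j)))
      = ∑ j ∈ Finset.range (m+2),
          (1 + (2-(1-α)/2)*(j:ℝ) + (1-(1-α)/2)*(j:ℝ)^2 + 0*(j:ℝ)^3) := by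
    refine Finset.sum_congr rfl fun j hj => ?_
    have hj' : j < m + 2 := Finset.mem_range.mp hj
    have e := hiii (j+1) (by omega) (by omega)
    rw [show j + 1 - 1 = j from by omega,
      show m + 4 - (j + 1) - 2 = m + 2 - 1 - j from by omega] at e
    simp only [Nat.cast_add, Nat.cast_one] at e
    linear_combination ((j:ℝ)+1) * e
  have h5 : ∑ j ∈ Finset.range (m+2),
      ((1 + 2*(j:ℝ) + 1*(j:ℝ)^2) * y (j+1)
        - (1-α)/2 * ((1 + 2*(j:ℝ) + 1*(j:ℝ)^2) * y j)
        - (1 - (1-α)/2) * ((1 + 2*(j:ℝ) + 1*(j:ℝ)^2) * x (m+2-1-j)))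
      = ∑ j ∈ Finset.range (m+2),
          (1 + (3-(1-α)/2)*(j:ℝ) + (3-(1-α))*(j:ℝ)^2 + (1-(1-α)/2)*(j:ℝ)^3) := by
    refine Finset.sum_congr rfl fun j hj => ?_
    have hj' : j < m + 2 := Finset.mem_range.mp hj
    have e := hiii (j+1) (by omega) (by omega)
    rw [show j + 1 - 1 = j from by omega,
      show m + 4 - (j + 1) - 2 = m + 2 - 1 - j from by omega] at e
    simp only [Nat.cast_add, Nat.cast_one] at e
    linear_combination ((j:ℝ)+1)^2 * e
  simp only [Finset.sum_sub_distrib, ← Finset.mul_sum] at h0 h1 h2 h3 h4 h5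
  rw [sum_weight (m+2) x 1 0 0, sum_weight (m+2) y 1 0 0, sum_reflect_eval (m+2) x 1 0 0,
    sum_cubic (m+2) 1 ((1-α)/2) 0 0] at h0
  rw [sum_weight (m+2) x 0 1 0, sum_weight (m+2) y 0 1 0, sum_reflect_eval (m+2) x 0 1 0,
    sum_cubic (m+2) 0 1 ((1-α)/2) 0] at h1
  rw [sum_weight (m+2) x 0 0 1, sum_weight (m+2) y 0 0 1, sum_reflect_eval (m+2) x 0 0 1,
    sum_cubic (m+2) 0 0 1 ((1-α)/2)] at h2
  rw [sum_shift_eval (m+2) y 1 0 0, sum_weight (m+2) y 1 0 0, sum_reflect_eval (m+2) x 1 0 0,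
    sum_cubic (m+2) 1 (1-(1-α)/2) 0 0] at h3
  rw [sum_shift_eval (m+2) y 1 1 0, sum_weight (m+2) y 1 1 0, sum_reflect_eval (m+2) x 1 1 0,
    sum_cubic (m+2) 1 (2-(1-α)/2) (1-(1-α)/2) 0] at h4
  rw [sum_shift_eval (m+2) y 1 2 1, sum_weight (m+2) y 1 2 1, sum_reflect_eval (m+2) x 1 2 1,
    sum_cubic (m+2) 1 (3-(1-α)/2) (3-(1-α)) (1-(1-α)/2)] at h5
  push_cast at h0 h1 h2 h3 h4 h5
  -- the key aggregated identity
  have key : (1-α)*(1+α)*(((m:ℝ)+2) * (∑ k ∈ Finset.range (m+2), x k)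
        - (∑ k ∈ Finset.range (m+2), (k:ℝ)*x k)
        + ((∑ j ∈ Finset.range (m+2), y j) + y (m+2)))
      = 53/2 + 31*α + 45/2*α^2 + 185/6*(m:ℝ) + 245/6*(m:ℝ)*α + 31*(m:ℝ)*α^2
        + 43/3*(m:ℝ)^2 + 133/6*(m:ℝ)^2*α + 95/6*(m:ℝ)^2*α^2
        + 163/48*(m:ℝ)^3 + 49/8*(m:ℝ)^3*α + 179/48*(m:ℝ)^3*α^2
        + 5/12*(m:ℝ)^4 + 5/6*(m:ℝ)^4*α + 5/12*(m:ℝ)^4*α^2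
        + 1/48*(m:ℝ)^5 + 1/24*(m:ℝ)^5*α + 1/48*(m:ℝ)^5*α^2 := by
    linear_combination
      (11/2 + 3*α + 7/2*α^2 + 11/4*(m:ℝ) + 5/2*(m:ℝ)*α + 7/4*(m:ℝ)*α^2
        + 1/4*(m:ℝ)^2 + 1/2*(m:ℝ)^2*α + 1/4*(m:ℝ)^2*α^2) * h0
      + (3/2 + 4*α + 5/2*α^2 + 3/2*(m:ℝ) + 3*(m:ℝ)*α + 3/2*(m:ℝ)*α^2
        + 1/4*(m:ℝ)^2 + 1/2*(m:ℝ)^2*α + 1/4*(m:ℝ)^2*α^2) * h1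
      + ((-1) + (-2)*α + (-1)*α^2 + (-1/4)*(m:ℝ) + (-1/2)*(m:ℝ)*α + (-1/4)*(m:ℝ)*α^2) * h2
      + (6 + 6*α + 7/2*(m:ℝ) + 7/2*(m:ℝ)*α + 1/2*(m:ℝ)^2 + 1/2*(m:ℝ)^2*α) * h3
      + ((-1/2) + 4*α + 9/2*α^2 + (m:ℝ) + 3*(m:ℝ)*α + 2*(m:ℝ)*α^2
        + 1/4*(m:ℝ)^2 + 1/2*(m:ℝ)^2*α + 1/4*(m:ℝ)^2*α^2) * h4
      + ((-1) + (-2)*α + (-1)*α^2 + (-1/4)*(m:ℝ) + (-1/2)*(m:ℝ)*α + (-1/4)*(m:ℝ)*α^2) * h5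
      + (6 + 6*α + 7/2*(m:ℝ) + 7/2*(m:ℝ)*α + 1/2*(m:ℝ)^2 + 1/2*(m:ℝ)^2*α) * hi
  -- evaluate the goal's sums
  have hY : ∑ j ∈ Finset.range (m+3), y j
      = (∑ j ∈ Finset.range (m+2), y j) + y (m+2) := by
    simpa using Finset.sum_range_succ y (m+2)
  have ha1' : (∑ k ∈ Finset.range (m+2), x k) = (∑ k ∈ Finset.range (m+1), x k) + x (m+1) := by
    simpa using Finset.sum_range_succ x (m+1)
  have ha2' : (∑ k ∈ Finset.range (m+2), (k:ℝ)*x k)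
      = (∑ k ∈ Finset.range (m+1), (k:ℝ)*x k) + ((m:ℝ)+1)*x (m+1) := by
    have e := Finset.sum_range_succ (fun k => (k:ℝ)*x k) (m+1)
    push_cast at e
    simpa using e
  have hDx : ∑ k ∈ Finset.range (m+1), (((m:ℝ)+1) + (-1)*(k:ℝ) + 0*(k:ℝ)^2) * x k
      = ((m:ℝ)+1) * (∑ k ∈ Finset.range (m+2), x k)
        - (∑ k ∈ Finset.range (m+2), (k:ℝ)*x k) := by
    rw [sum_weight (m+1) x ((m:ℝ)+1) (-1) 0, ha1', ha2']; ring
  have hDnum : ∑ k ∈ Finset.range (m+1), ((m:ℝ)+1-(k:ℝ))*(((m:ℝ)+1-(k:ℝ))+1)/2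
      = ((m:ℝ)+1)*((m:ℝ)+2)*((m:ℝ)+3)/6 := by
    have hc : ∑ k ∈ Finset.range (m+1), ((m:ℝ)+1-(k:ℝ))*(((m:ℝ)+1-(k:ℝ))+1)/2
        = ∑ k ∈ Finset.range (m+1),
            ((((m:ℝ)+1)*((m:ℝ)+2)/2) + (-((2*(m:ℝ)+3)/2))*(k:ℝ) + (1/2)*(k:ℝ)^2 + 0*(k:ℝ)^3) :=
      Finset.sum_congr rfl fun k _ => by ring
    rw [hc, sum_cubic]; push_cast; ring
  have hD : ∑ k ∈ Finset.range (m+1), ∑ l ∈ Finset.Icc 1 (m+1-k), ((l:ℝ) + x k)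
      = ((m:ℝ)+1)*((m:ℝ)+2)*((m:ℝ)+3)/6
        + (((m:ℝ)+1) * (∑ k ∈ Finset.range (m+2), x k)
          - (∑ k ∈ Finset.range (m+2), (k:ℝ)*x k)) := by
    have hA : ∑ k ∈ Finset.range (m+1), ∑ l ∈ Finset.Icc 1 (m+1-k), ((l:ℝ) + x k)
        = ∑ k ∈ Finset.range (m+1),
            (((m:ℝ)+1-(k:ℝ))*(((m:ℝ)+1-(k:ℝ))+1)/2
              + (((m:ℝ)+1) + (-1)*(k:ℝ) + 0*(k:ℝ)^2) * x k) := by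
      refine Finset.sum_congr rfl fun k hk => ?_
      have hk' : k < m + 1 := Finset.mem_range.mp hk
      rw [sum_icc (m+1-k) (x k),
        show ((m+1-k:ℕ):ℝ) = (m:ℝ)+1-(k:ℝ) from by
          rw [Nat.cast_sub (by omega)]; push_cast; ring]
      ring
    rw [hA, Finset.sum_add_distrib, hDnum, hDx]
  rw [hY, hD]
  push_cast
  have hd1 : ((m:ℝ)+4) * (((m:ℝ)+4) - 1) ≠ 0 := by
    have hm : (0:ℝ) ≤ (m:ℝ) := Nat.cast_nonneg m
    have : (0:ℝ) < ((m:ℝ)+4) * (((m:ℝ)+4) - 1) := by nlinarith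
    exact ne_of_gt this
  have hd2 : 24 * ((m:ℝ)+4) * (1-α) * (1+α) ≠ 0 := by
    have h1 : (0:ℝ) < 1 - α := by linarith [hα.2]
    have h2 : (0:ℝ) < 1 + α := by linarith [hα.1]
    have hm : (0:ℝ) ≤ (m:ℝ) := Nat.cast_nonneg m
    have : (0:ℝ) < 24 * ((m:ℝ)+4) * (1-α) * (1+α) := by positivity
    exact ne_of_gt this
  rw [div_eq_div_iff hd1 hd2]
  linear_combination (48*((m:ℝ)+4)) * key
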